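/- arXiv:1612.04541 — 2 statements merged into one kernel-verified Lean document; each statement's English description precedes it below -/
import Mathlib

section
/- (Distance formula (4.11), segment A₂Q in the truncated orthoscheme) Assume B < 0 and sin²(π/u) < cos²(π/v) (the vertex A₃ is an outer point, so a₃₃ > 0 while a₂₂ < 0). Let q = a₂ − (a₂₃/a₃₃)·a₃ be the vector of the truncation point Q = pol(A₃) ∩ A₃A₂. Then ⟨q,q⟩ = a₂₂/a₃₃ < 0 and −⟨a₂, q⟩/√(⟨a₂,a₂⟩·⟨q,q⟩) = 1/√(a₃₃) = √(1 + sin²(π/u)·cos²(π/w)/(cos²(π/v) − sin²(π/u))). (This quantity is cosh of the hyperbolic distance from the vertex A₂ to the point Q.) -/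
open Real Matrix

/-- The Coxeter–Schläfli matrix of the complete orthoscheme `W_{uvw}`. -/
noncomputable def CSmatrix (u v w : ℝ) : Matrix (Fin 4) (Fin 4) ℝ :=
  !![1, -cos (π/u), 0, 0;
     -cos (π/u), 1, -cos (π/v), 0;
     0, -cos (π/v), 1, -cos (π/w);
     0, 0, -cos (π/w), 1]

/-- The inverse of the Coxeter–Schläfli matrix; its entries are the `a_{ij}`. -/
noncomputable def CSinv (u v w : ℝ) : Matrix (Fin 4) (Fin 4) ℝ :=
  (CSmatrix u v w)⁻¹

lemma csdet (u v w : ℝ) : (CSmatrix u v w).det =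
    (1 - cos (π/u)^2 - cos (π/v)^2) - cos (π/w)^2 * (1 - cos (π/u)^2) := by
  simp [CSmatrix, Matrix.det_succ_row_zero, Fin.sum_univ_succ, Fin.succAbove]
  ring

noncomputable def CSadj (u v w : ℝ) : Matrix (Fin 4) (Fin 4) ℝ :=
  !![1 - cos (π/v)^2 - cos (π/w)^2, cos (π/u)*(1-cos (π/w)^2), cos (π/u)*cos (π/v), cos (π/u)*cos (π/v)*cos (π/w);
     cos (π/u)*(1-cos (π/w)^2), 1-cos (π/w)^2, cos (π/v), cos (π/v)*cos (π/w);
     cos (π/u)*cos (π/v), cos (π/v), 1-cos (π/u)^2, cos (π/w)*(1-cos (π/u)^2);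
     cos (π/u)*cos (π/v)*cos (π/w), cos (π/v)*cos (π/w), cos (π/w)*(1-cos (π/u)^2), 1-cos (π/u)^2-cos (π/v)^2]

lemma csinv_eq (u v w : ℝ) (hdet : (CSmatrix u v w).det ≠ 0) :
    CSinv u v w = ((CSmatrix u v w).det)⁻¹ • CSadj u v w := by
  apply inv_eq_right_inv
  have hmul : CSmatrix u v w * CSadj u v w = (CSmatrix u v w).det • 1 := by
    rw [csdet]
    ext i j
    fin_cases i <;> fin_cases j <;>
      simp [CSmatrix, CSadj, Matrix.mul_apply, Fin.sum_univ_four, Matrix.one_apply] <;> ring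
  rw [Matrix.mul_smul, hmul, smul_smul, inv_mul_cancel₀ hdet, one_smul]

theorem stmt18 (u v w : ℝ) (hu : 3 ≤ u) (hv : 3 ≤ v) (hw : 3 ≤ w)
    (hdet : (CSmatrix u v w).det ≠ 0)
    {V : Type*} [AddCommGroup V] [Module ℝ V]
    (Bf : LinearMap.BilinForm ℝ V)
    (hsymm : ∀ x y : V, Bf x y = Bf y x)
    (a : Fin 4 → V)
    (hGram : ∀ i j : Fin 4, Bf (a i) (a j) = CSinv u v w i j)
    (hBneg : (CSmatrix u v w).det < 0)
    (h1 : sin (π/u) ^ 2 < cos (π/v) ^ 2)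
    (q : V) (hq : q = a 2 - (CSinv u v w 2 3 / CSinv u v w 3 3) • a 3) :
    0 < CSinv u v w 3 3 ∧ CSinv u v w 2 2 < 0 ∧
    Bf q q = CSinv u v w 2 2 / CSinv u v w 3 3 ∧ Bf q q < 0 ∧
    -Bf (a 2) q / Real.sqrt (Bf (a 2) (a 2) * Bf q q) = 1 / Real.sqrt (CSinv u v w 3 3) ∧
    1 / Real.sqrt (CSinv u v w 3 3) =
      Real.sqrt (1 + sin (π/u) ^ 2 * cos (π/w) ^ 2 /
        (cos (π/v) ^ 2 - sin (π/u) ^ 2)) := by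
  set x := cos (π/u) with hx
  set y := cos (π/v) with hy
  set z := cos (π/w) with hz
  set d := (CSmatrix u v w).det with hdd
  have hd : d = (1 - x^2 - y^2) - z^2 * (1 - x^2) := csdet u v w
  have hinv := csinv_eq u v w hdet
  -- entries
  have h22 : CSinv u v w 2 2 = d⁻¹ * (1 - x^2) := by
    rw [hinv]; simp [CSadj]; rfl
  have h23 : CSinv u v w 2 3 = d⁻¹ * (z * (1 - x^2)) := by
    rw [hinv]; simp [CSadj]; rfl
  have h32 : CSinv u v w 3 2 = d⁻¹ * (z * (1 - x^2)) := by
    rw [hinv]; simp [CSadj]; rfl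
  have h33 : CSinv u v w 3 3 = d⁻¹ * (1 - x^2 - y^2) := by
    rw [hinv]; simp [CSadj]; rfl
  -- basic sign facts
  have hsin : 0 < sin (π/u) := by
    apply Real.sin_pos_of_pos_of_lt_pi
    · positivity
    · exact div_lt_self pi_pos (by linarith)
  have hs2 : sin (π/u)^2 = 1 - x^2 := by
    have := sin_sq_add_cos_sq (π/u); linarith
  have hxpos : 0 < 1 - x^2 := by rw [← hs2]; positivity
  have hN : 1 - x^2 - y^2 < 0 := by nlinarith [h1, hs2]
  have hA33 : 0 < CSinv u v w 3 3 := by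
    rw [h33]
    exact mul_pos_of_neg_of_neg (inv_neg''.mpr hBneg) hN
  have hA22 : CSinv u v w 2 2 < 0 := by
    rw [h22]
    exact mul_neg_of_neg_of_pos (inv_neg''.mpr hBneg) hxpos
  have hA33ne : CSinv u v w 3 3 ≠ 0 := ne_of_gt hA33
  have hA22ne : CSinv u v w 2 2 ≠ 0 := ne_of_lt hA22
  have hdne : d ≠ 0 := hdet
  -- key identity: a22 * a33 - a23^2 = a22
  have hkey : CSinv u v w 2 2 * CSinv u v w 3 3 - CSinv u v w 2 3 ^ 2
      = CSinv u v w 2 2 := by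
    have hdinv : d⁻¹ * d = 1 := inv_mul_cancel₀ hdne
    have hpoly : (1-x^2)*(1-x^2-y^2) - (z*(1-x^2))^2 = d*(1-x^2) := by rw [hd]; ring
    rw [h22, h23, h33]
    linear_combination (d⁻¹)^2 * hpoly + d⁻¹*(1-x^2)*hdinv
  -- Bf q q
  have hBa2q : Bf (a 2) q = CSinv u v w 2 2 / CSinv u v w 3 3 := by
    rw [hq]
    simp only [map_sub, _root_.map_smul, LinearMap.sub_apply, LinearMap.smul_apply, smul_eq_mul,
      hGram]
    field_simp
    linear_combination hkey
  have hBqq : Bf q q = CSinv u v w 2 2 / CSinv u v w 3 3 := by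
    rw [hq]
    simp only [map_sub, _root_.map_smul, LinearMap.sub_apply, LinearMap.smul_apply, smul_eq_mul,
      hGram]
    rw [h32, ← h23]
    field_simp
    linear_combination hkey
  have hBqqneg : Bf q q < 0 := by
    rw [hBqq]; exact div_neg_of_neg_of_pos hA22 hA33
  refine ⟨hA33, hA22, hBqq, hBqqneg, ?_, ?_⟩
  · -- cosh formula
    set r := Real.sqrt (CSinv u v w 3 3) with hr
    have hrpos : 0 < r := Real.sqrt_pos.mpr hA33
    have hrsq : r^2 = CSinv u v w 3 3 := Real.sq_sqrt hA33.le
    have hsq : Real.sqrt (Bf (a 2) (a 2) * Bf q q)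
        = -CSinv u v w 2 2 / r := by
      rw [hGram, hBqq, show CSinv u v w 2 2 * (CSinv u v w 2 2 / CSinv u v w 3 3)
          = (-CSinv u v w 2 2 / r)^2 by rw [div_pow, hrsq]; ring]
      exact Real.sqrt_sq (div_nonneg (by linarith) hrpos.le)
    rw [hBa2q, hsq, ← hrsq]
    field_simp
  · -- explicit formula
    rw [one_div, ← Real.sqrt_inv]
    congr 1
    rw [h33, hs2]
    rw [show (d⁻¹ * (1 - x^2 - y^2))⁻¹ = d * (1 - x^2 - y^2)⁻¹ by
      rw [mul_inv, inv_inv]]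
    have hne1 : 1 - x^2 - y^2 ≠ 0 := ne_of_lt hN
    have hne2 : y^2 - (1 - x^2) ≠ 0 := by intro h; apply hne1; linarith
    field_simp
    linear_combination (y^2 - (1-x^2)) * hd
end

section
/- (Distance formula (4.16), segment QE in the truncated orthoscheme) Assume B < 0 and sin²(π/u) < cos²(π/v) (the vertex A₃ is an outer point, so a₃₃ > 0). Let q = a₂ − (a₂₃/a₃₃)·a₃ and e = a₁ − (a₁₃/a₃₃)·a₃ be the vectors of the truncation points Q = pol(A₃) ∩ A₃A₂ and E = pol(A₃) ∩ A₃A₁. Then ⟨q,q⟩ < 0, ⟨e,e⟩ < 0, and −⟨q, e⟩/√(⟨q,q⟩·⟨e,e⟩) = cos(π/v)/sin(π/u). (This quantity is cosh of the hyperbolic distance between the points Q and E.) -/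
open Real Matrix

noncomputable def Ncof (u v w : ℝ) : Matrix (Fin 4) (Fin 4) ℝ :=
  let x := cos (π/u); let y := cos (π/v); let z := cos (π/w)
  !![1-y^2-z^2, x*(1-z^2), x*y, x*y*z;
     x*(1-z^2), 1-z^2, y, y*z;
     x*y, y, 1-x^2, z*(1-x^2);
     x*y*z, y*z, z*(1-x^2), 1-x^2-y^2]

lemma detCS (u v w : ℝ) : (CSmatrix u v w).det
    = (1 - cos (π/u)^2) * (1 - cos (π/w)^2) - cos (π/v)^2 := by
  simp [CSmatrix, Matrix.det_succ_row_zero, Fin.sum_univ_succ, Fin.succAbove]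
  ring

lemma CSinv_eq (u v w : ℝ) (hdet : (CSmatrix u v w).det ≠ 0) :
    CSinv u v w = (CSmatrix u v w).det⁻¹ • Ncof u v w := by
  have h : CSmatrix u v w * ((CSmatrix u v w).det⁻¹ • Ncof u v w) = 1 := by
    rw [Matrix.mul_smul]
    have key : CSmatrix u v w * Ncof u v w = (CSmatrix u v w).det • 1 := by
      rw [detCS]
      ext i j
      fin_cases i <;> fin_cases j <;>
        simp [CSmatrix, Ncof, Matrix.mul_apply, Fin.sum_univ_succ, Matrix.one_apply] <;> ring
    rw [key, smul_smul, inv_mul_cancel₀ hdet, one_smul]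
  exact Matrix.inv_eq_right_inv h

theorem stmt19 (u v w : ℝ) (hu : 3 ≤ u) (hv : 3 ≤ v) (hw : 3 ≤ w)
    (hdet : (CSmatrix u v w).det ≠ 0)
    {V : Type*} [AddCommGroup V] [Module ℝ V]
    (Bf : LinearMap.BilinForm ℝ V)
    (hsymm : ∀ x y : V, Bf x y = Bf y x)
    (a : Fin 4 → V)
    (hGram : ∀ i j : Fin 4, Bf (a i) (a j) = CSinv u v w i j)
    (hBneg : (CSmatrix u v w).det < 0)
    (h1 : sin (π/u) ^ 2 < cos (π/v) ^ 2)
    (q e : V)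
    (hq : q = a 2 - (CSinv u v w 2 3 / CSinv u v w 3 3) • a 3)
    (he : e = a 1 - (CSinv u v w 1 3 / CSinv u v w 3 3) • a 3) :
    0 < CSinv u v w 3 3 ∧ Bf q q < 0 ∧ Bf e e < 0 ∧
    -Bf q e / Real.sqrt (Bf q q * Bf e e) = cos (π/v) / sin (π/u) := by
  set x := cos (π/u) with hxdef
  set y := cos (π/v) with hydef
  set z := cos (π/w) with hzdef
  set d := (CSmatrix u v w).det with hddef
  have hd : d = (1 - x^2) * (1 - z^2) - y^2 := detCS u v w
  have hinv := CSinv_eq u v w hdet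
  have hsin : 0 < sin (π/u) := by
    apply Real.sin_pos_of_pos_of_lt_pi
    · positivity
    · calc π/u ≤ π/3 := by
            apply div_le_div_of_nonneg_left pi_pos.le (by norm_num) hu
         _ < π := by linarith [pi_pos]
  have hsin2 : sin (π/u)^2 = 1 - x^2 := by
    rw [hxdef]; rw [Real.sin_sq]
  have h1x : 0 < 1 - x^2 := by rw [← hsin2]; positivity
  set S := 1 - x^2 - y^2 with hSdef
  have hS : S < 0 := by nlinarith [hsin2]
  -- entry values
  have e33 : CSinv u v w 3 3 = d⁻¹ * S := by rw [hinv]; simp [Ncof, hSdef]; rfl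
  have e23 : CSinv u v w 2 3 = d⁻¹ * (z*(1-x^2)) := by rw [hinv]; simp [Ncof]; rfl
  have e22 : CSinv u v w 2 2 = d⁻¹ * (1-x^2) := by rw [hinv]; simp [Ncof]; rfl
  have e13 : CSinv u v w 1 3 = d⁻¹ * (y*z) := by rw [hinv]; simp [Ncof]; rfl
  have e12 : CSinv u v w 1 2 = d⁻¹ * y := by rw [hinv]; simp [Ncof]; rfl
  have e11 : CSinv u v w 1 1 = d⁻¹ * (1-z^2) := by rw [hinv]; simp [Ncof]; rfl
  have h33pos : 0 < CSinv u v w 3 3 := by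
    rw [e33]
    have : d⁻¹ < 0 := inv_lt_zero.mpr hBneg
    exact mul_pos_of_neg_of_neg this hS
  have h33ne : CSinv u v w 3 3 ≠ 0 := h33pos.ne'
  have hdne : d ≠ 0 := hdet
  have hSne : S ≠ 0 := hS.ne
  -- bilinear expansions
  have hqq : Bf q q = (1 - x^2) / S := by
    rw [hq]
    simp only [map_sub, _root_.map_smul, LinearMap.sub_apply, LinearMap.smul_apply, smul_eq_mul]
    rw [hGram 2 2, hGram 2 3, hGram 3 2, hGram 3 3]
    have h32 : CSinv u v w 3 2 = CSinv u v w 2 3 := by rw [← hGram, hsymm, hGram]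
    rw [h32, e22, e23, e33]
    field_simp
    rw [hd]; ring
  have hee : Bf e e = 1 / S := by
    rw [he]
    simp only [map_sub, _root_.map_smul, LinearMap.sub_apply, LinearMap.smul_apply, smul_eq_mul]
    rw [hGram 1 1, hGram 1 3, hGram 3 1, hGram 3 3]
    have h31 : CSinv u v w 3 1 = CSinv u v w 1 3 := by rw [← hGram, hsymm, hGram]
    rw [h31, e11, e13, e33]
    field_simp
    rw [hd]; ring
  have hqe : Bf q e = y / S := by
    rw [hq, he]
    simp only [map_sub, _root_.map_smul, LinearMap.sub_apply, LinearMap.smul_apply, smul_eq_mul]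
    rw [hGram 2 1, hGram 2 3, hGram 3 1, hGram 3 3]
    have h21 : CSinv u v w 2 1 = CSinv u v w 1 2 := by rw [← hGram, hsymm, hGram]
    have h31 : CSinv u v w 3 1 = CSinv u v w 1 3 := by rw [← hGram, hsymm, hGram]
    rw [h21, h31, e12, e23, e13, e33]
    field_simp
    rw [hd]; ring
  refine ⟨h33pos, ?_, ?_, ?_⟩
  · rw [hqq]; exact div_neg_of_pos_of_neg h1x hS
  · rw [hee]; exact div_neg_of_pos_of_neg one_pos hS
  · rw [hqq, hee, hqe]
    have hprod : (1 - x^2)/S * (1/S) = (sin (π/u) / (-S))^2 := by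
      rw [div_pow, ← hsin2]; field_simp
    have hnS : 0 < -S := neg_pos.mpr hS
    rw [hprod, Real.sqrt_sq (div_nonneg hsin.le hnS.le)]
    field_simp
end
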